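/- arXiv:2503.14497 — 2 statements merged into one kernel-verified Lean document; each statement's English description precedes it below -/
import Mathlib

section
/- Let S be a compound Poisson random variable: S = T_1 + ... + T_N where N ~ Poisson(lambda), lambda > 0, and (T_i) are i.i.d. exponential with mean 1, independent of N. Then for every theta with 0 < theta < 1, P[S <= theta * lambda] <= exp(-lambda * (1 - sqrt(theta))^2). -/
open MeasureTheory ProbabilityTheory

open Real Set


lemma cpl_expMeasure_Iic (t : ℝ) :
    expMeasure 1 (Iic t) = ENNReal.ofReal (if 0 ≤ t then 1 - Real.exp (-t) else 0) := by
  have h : expMeasure 1 (Iic t) = ∫⁻ y in Iic t, exponentialPDF 1 y := by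
    rw [expMeasure, gammaMeasure, withDensity_apply _ measurableSet_Iic]; rfl
  rw [h, lintegral_exponentialPDF_eq_antiDeriv one_pos t]
  simp

lemma cpl_map_eq {Ω : Type*} [MeasurableSpace Ω] (μ : Measure Ω) [IsProbabilityMeasure μ]
    (X : Ω → ℝ) (hXm : Measurable X)
    (hX : ∀ t : ℝ, 0 ≤ t → μ {ω | X ω ≤ t} = ENNReal.ofReal (1 - Real.exp (-t))) :
    μ.map X = expMeasure 1 := by
  have h1 : IsProbabilityMeasure (μ.map X) := Measure.isProbabilityMeasure_map hXm.aemeasurable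
  have h2 : IsProbabilityMeasure (expMeasure 1) := isProbabilityMeasure_expMeasure one_pos
  refine Measure.ext_of_Iic _ _ (fun t => ?_)
  rw [Measure.map_apply hXm measurableSet_Iic, cpl_expMeasure_Iic]
  by_cases h : 0 ≤ t
  · rw [if_pos h, ← hX t h]; rfl
  · rw [if_neg h, ENNReal.ofReal_zero]
    have hsub : X ⁻¹' Iic t ⊆ {ω | X ω ≤ 0} :=
      fun ω (hω : X ω ≤ t) => (le_of_lt (lt_of_le_of_lt hω (not_le.1 h)) : X ω ≤ 0)
    have h0 : μ {ω | X ω ≤ 0} = 0 := by rw [hX 0 le_rfl]; simp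
    exact le_antisymm (le_trans (measure_mono hsub) h0.le) (zero_le)

lemma cpl_laplace {Ω : Type*} [MeasurableSpace Ω] (μ : Measure Ω) [IsProbabilityMeasure μ]
    (X : Ω → ℝ) (hXm : Measurable X)
    (hX : ∀ t : ℝ, 0 ≤ t → μ {ω | X ω ≤ t} = ENNReal.ofReal (1 - Real.exp (-t)))
    (a : ℝ) (ha : 0 < a) :
    ∫⁻ ω, ENNReal.ofReal (Real.exp (-(a * X ω))) ∂μ = ENNReal.ofReal (1 / (1 + a)) := by
  have hmap := cpl_map_eq μ X hXm hX
  have hmeas : Measurable fun x : ℝ => ENNReal.ofReal (Real.exp (-(a * x))) :=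
    ((measurable_id.const_mul a).neg.exp).ennreal_ofReal
  have hpdfm : Measurable (gammaPDF 1 1) := (measurable_gammaPDFReal 1 1).ennreal_ofReal
  rw [← lintegral_map hmeas hXm, hmap, expMeasure, gammaMeasure,
    lintegral_withDensity_eq_lintegral_mul _ hpdfm hmeas]
  have h1a : (0:ℝ) < 1 + a := by linarith
  have key : ∀ x : ℝ, (gammaPDF 1 1 * fun x => ENNReal.ofReal (Real.exp (-(a * x)))) x
      = (Ioi (0:ℝ)).indicator (fun x => ENNReal.ofReal (Real.exp (-((1+a) * x)))) x ∨ x = 0 := by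
    intro x
    rcases lt_trichotomy x 0 with hx | hx | hx
    · left
      simp only [Pi.mul_apply, indicator_of_notMem (by simpa using hx.le : x ∉ Ioi (0:ℝ))]
      rw [show gammaPDF 1 1 x = exponentialPDF 1 x from rfl, exponentialPDF_of_neg hx, zero_mul]
    · right; exact hx
    · left
      simp only [Pi.mul_apply, indicator_of_mem (mem_Ioi.2 hx)]
      rw [show gammaPDF 1 1 x = exponentialPDF 1 x from rfl, exponentialPDF_of_nonneg hx.le,
        ← ENNReal.ofReal_mul (by positivity), one_mul, ← Real.exp_add]
      ring_nf
  have heq : (fun x => (gammaPDF 1 1 * fun x => ENNReal.ofReal (Real.exp (-(a * x)))) x)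
      =ᵐ[volume] (Ioi (0:ℝ)).indicator (fun x => ENNReal.ofReal (Real.exp (-((1+a) * x)))) := by
    have h0 : ∀ᵐ x : ℝ, x ≠ 0 := by
      refine ae_iff.2 ?_
      simpa using measure_singleton (0:ℝ)
    filter_upwards [h0] with x hx
    rcases key x with h | h
    · exact h
    · exact absurd h hx
  rw [lintegral_congr_ae heq, lintegral_indicator measurableSet_Ioi]
  have hInt : IntegrableOn (fun x => Real.exp (-((1+a) * x))) (Ioi (0:ℝ)) := by
    exact (exp_neg_integrableOn_Ioi 0 h1a).congr_fun
      (fun x _ => by simp only [neg_mul]) measurableSet_Ioi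
  rw [← ofReal_integral_eq_lintegral_ofReal hInt (ae_of_all _ fun x => (Real.exp_pos _).le)]
  congr 1
  have := integral_comp_mul_left_Ioi (fun x => Real.exp (-x)) 0 h1a
  simp only [mul_zero] at this
  rw [show (fun x => Real.exp (-((1+a) * x))) = fun x => Real.exp (-(((1+a)) * x)) from rfl]
  calc ∫ x in Ioi (0:ℝ), Real.exp (-((1+a) * x))
      = (1+a)⁻¹ • ∫ x in Ioi (0:ℝ), Real.exp (-x) := this
    _ = 1 / (1+a) := by rw [integral_exp_neg_Ioi_zero]; simp [one_div]

lemma cpl_prod_lintegral {Ω : Type*} [MeasurableSpace Ω] (μ : Measure Ω) [IsProbabilityMeasure μ]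
    (f : ℕ → Ω → ENNReal) (hfm : ∀ i, Measurable (f i))
    (hf : iIndepFun f μ) (n : ℕ) :
    ∫⁻ ω, ∏ i ∈ Finset.range n, f i ω ∂μ = ∏ i ∈ Finset.range n, ∫⁻ ω, f i ω ∂μ := by
  induction n with
  | zero => simp
  | succ n ih =>
    simp only [Finset.prod_range_succ]
    rw [← ih]
    have hind : IndepFun (∏ i ∈ Finset.range n, f i) (f n) μ :=
      hf.indepFun_finsetProd_of_notMem hfm (by simp)
    have hm : Measurable (∏ i ∈ Finset.range n, f i) := by
      rw [show (∏ i ∈ Finset.range n, f i) = fun ω => ∏ i ∈ Finset.range n, f i ω from by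
        funext ω; simp [Finset.prod_apply]]
      exact Finset.measurable_prod _ fun i _ => hfm i
    have := lintegral_mul_eq_lintegral_mul_lintegral_of_indepFun hm (hfm n) hind
    simp only [Pi.mul_apply, Finset.prod_apply] at this ⊢
    exact this

lemma cpl_real_tsum (lam s : ℝ) :
    ∑' n : ℕ, Real.exp (-lam) * lam ^ n / (Nat.factorial n) * s ^ n
      = Real.exp (-lam) * Real.exp (lam * s) := by
  have h1 : ∀ n : ℕ, Real.exp (-lam) * lam ^ n / (Nat.factorial n) * s ^ n
      = Real.exp (-lam) * ((lam * s) ^ n / (Nat.factorial n)) := by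
    intro n; rw [mul_pow]; ring
  simp only [h1]
  rw [tsum_mul_left]
  congr 1
  rw [Real.exp_eq_exp_ℝ, NormedSpace.exp_eq_tsum_div]

/-- Lower-deviation bound for a compound Poisson sum of unit-mean exponentials: if
`N ~ Poisson(lam)` and `(T i)` are i.i.d. exponential with mean `1`, all jointly
independent, and `S = T 0 + ⋯ + T (N-1)`, then for every `0 < θ < 1`,
`P[S ≤ θ lam] ≤ exp(-lam (1 - √θ)²)`. -/
theorem compound_poisson_lower_tail {Ω : Type*} [MeasurableSpace Ω] (μ : Measure Ω)
    [IsProbabilityMeasure μ] (lam : ℝ) (hlam : 0 < lam)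
    (N : Ω → ℕ) (T : ℕ → Ω → ℝ) (hNm : Measurable N) (hTm : ∀ i, Measurable (T i))
    (hN : ∀ n : ℕ, μ {ω | N ω = n} =
      ENNReal.ofReal (Real.exp (-lam) * lam ^ n / (Nat.factorial n)))
    (hT : ∀ i, ∀ t : ℝ, 0 ≤ t → μ {ω | T i ω ≤ t} = ENNReal.ofReal (1 - Real.exp (-t)))
    (hTiid : iIndepFun T μ)
    (hNT : IndepFun N (fun ω i => T i ω) μ)
    (θ : ℝ) (hθ0 : 0 < θ) (hθ1 : θ < 1) :
    μ {ω | ∑ i ∈ Finset.range (N ω), T i ω ≤ θ * lam} ≤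
      ENNReal.ofReal (Real.exp (-lam * (1 - Real.sqrt θ) ^ 2)) := by
  set s : ℝ := Real.sqrt θ with hs
  have hs0 : 0 < s := Real.sqrt_pos.2 hθ0
  have hs2 : s ^ 2 = θ := Real.sq_sqrt hθ0.le
  have hs1 : s < 1 := by nlinarith
  set a : ℝ := 1 / s - 1 with ha
  have ha0 : 0 < a := by
    have : 1 < 1 / s := by rw [lt_div_iff₀ hs0]; linarith
    simp only [ha]; linarith
  have h1a : 1 + a = 1 / s := by rw [ha]; ring
  have hinv : 1 / (1 + a) = s := by rw [h1a, one_div_one_div]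
  -- the ℝ≥0∞-valued factors
  set f : ℕ → Ω → ENNReal := fun i ω => ENNReal.ofReal (Real.exp (-(a * T i ω))) with hf
  have hfm : ∀ i, Measurable (f i) :=
    fun i => (((hTm i).const_mul a).neg.exp).ennreal_ofReal
  have hfiid : iIndepFun f μ :=
    hTiid.comp (fun _ x => ENNReal.ofReal (Real.exp (-(a * x))))
      (fun _ => ((measurable_id.const_mul a).neg.exp).ennreal_ofReal)
  have hLi : ∀ i, ∫⁻ ω, f i ω ∂μ = ENNReal.ofReal s := by
    intro i
    rw [hf]
    rw [cpl_laplace μ (T i) (hTm i) (hT i) a ha0, hinv]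
  have hprod : ∀ n, ∫⁻ ω, ∏ i ∈ Finset.range n, f i ω ∂μ = (ENNReal.ofReal s) ^ n := by
    intro n
    rw [cpl_prod_lintegral μ f hfm hfiid n]
    simp [hLi]
  -- S and F
  set S : Ω → ℝ := fun ω => ∑ i ∈ Finset.range (N ω), T i ω with hS
  have hSm : Measurable S := by
    have h1 : Measurable fun p : Ω × ℕ => ∑ i ∈ Finset.range p.2, T i p.1 :=
      measurable_from_prod_countable_left fun n =>
        Finset.measurable_sum (Finset.range n) fun i _ => hTm i
    exact h1.comp (measurable_id.prodMk hNm)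
  set F : Ω → ENNReal := fun ω => ENNReal.ofReal (Real.exp (-(a * S ω))) with hF
  have hFm : Measurable F := ((hSm.const_mul a).neg.exp).ennreal_ofReal
  -- partition over values of N
  have hmeasn : ∀ n : ℕ, MeasurableSet {ω | N ω = n} :=
    fun n => hNm (measurableSet_singleton n)
  have hdisj : Pairwise (Function.onFun Disjoint fun n : ℕ => {ω | N ω = n}) := by
    intro m n hmn
    simp only [Function.onFun, Set.disjoint_left]
    rintro ω (h1 : N ω = m) (h2 : N ω = n)
    exact hmn (h1 ▸ h2 ▸ rfl)
  have hcover : (⋃ n : ℕ, {ω | N ω = n}) = Set.univ := by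
    ext ω; simp
  have hsplit : ∫⁻ ω, F ω ∂μ = ∑' n : ℕ, ∫⁻ ω in {ω | N ω = n}, F ω ∂μ := by
    rw [← setLIntegral_univ, ← hcover, lintegral_iUnion hmeasn hdisj]
  -- on each piece, independence
  have hpiece : ∀ n : ℕ, ∫⁻ ω in {ω | N ω = n}, F ω ∂μ
      = μ {ω | N ω = n} * (ENNReal.ofReal s) ^ n := by
    intro n
    have hcongr : ∫⁻ ω in {ω | N ω = n}, F ω ∂μ
        = ∫⁻ ω in {ω | N ω = n}, ∏ i ∈ Finset.range n, f i ω ∂μ := by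
      refine setLIntegral_congr_fun (hmeasn n) ?_
      intro ω hω
      have hωn : N ω = n := hω
      simp only [hF, hf, hS, hωn]
      rw [show -(a * ∑ i ∈ Finset.range n, T i ω) = ∑ i ∈ Finset.range n, -(a * T i ω) by
          rw [Finset.mul_sum, ← Finset.sum_neg_distrib],
        Real.exp_sum, ENNReal.ofReal_prod_of_nonneg fun i _ => (Real.exp_pos _).le]
    rw [hcongr]
    set gN : ℕ → ENNReal := fun k => if k = n then 1 else 0 with hgN
    set h : (ℕ → ℝ) → ENNReal :=
      fun v => ∏ i ∈ Finset.range n, ENNReal.ofReal (Real.exp (-(a * v i))) with hh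
    have hgNm : Measurable gN := measurable_of_countable gN
    have hhm : Measurable h :=
      Finset.measurable_prod _ fun i _ =>
        (by fun_prop : Measurable fun v : ℕ → ℝ => Real.exp (-(a * v i))).ennreal_ofReal
    have hind : IndepFun (fun ω => gN (N ω)) (fun ω => h (fun i => T i ω)) μ :=
      hNT.comp hgNm hhm
    have heq : ∀ ω, Set.indicator {ω | N ω = n}
        (fun ω => ∏ i ∈ Finset.range n, f i ω) ω = gN (N ω) * h (fun i => T i ω) := by
      intro ω
      simp only [Set.indicator, Set.mem_setOf_eq, hgN, hh, hf]
      by_cases hω : N ω = n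
      · simp [hω]
      · simp [hω]
    have key := lintegral_mul_eq_lintegral_mul_lintegral_of_indepFun'' (μ := μ)
      (f := fun ω => gN (N ω)) (g := fun ω => h fun i => T i ω)
      (hgNm.comp hNm).aemeasurable
      ((hhm.comp (measurable_pi_lambda _ fun i => hTm i)).aemeasurable) hind
    rw [← lintegral_indicator (hmeasn n), lintegral_congr heq, key]
    have h1 : (fun ω => gN (N ω)) = Set.indicator {ω | N ω = n} 1 := by
      funext ω
      simp only [Set.indicator, Set.mem_setOf_eq, hgN]
      by_cases hω : N ω = n
      · simp [hω]
      · simp [hω]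
    have h2 : ∫⁻ ω, gN (N ω) ∂μ = μ {ω | N ω = n} := by
      rw [h1, lintegral_indicator_one (hmeasn n)]
    have h3 : ∫⁻ ω, h (fun i => T i ω) ∂μ = (ENNReal.ofReal s) ^ n := by
      rw [← hprod n]
    rw [h2, h3]
  -- compute the full Laplace transform
  have hmain : ∫⁻ ω, F ω ∂μ = ENNReal.ofReal (Real.exp (lam * s - lam)) := by
    rw [hsplit]
    have hterm : ∀ n : ℕ, μ {ω | N ω = n} * (ENNReal.ofReal s) ^ n
        = ENNReal.ofReal (Real.exp (-lam) * lam ^ n / (Nat.factorial n) * s ^ n) := by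
      intro n
      rw [hN n, ← ENNReal.ofReal_pow hs0.le, ← ENNReal.ofReal_mul (by positivity)]
    simp only [hpiece, hterm]
    have hnonneg : ∀ n : ℕ, 0 ≤ Real.exp (-lam) * lam ^ n / (Nat.factorial n) * s ^ n :=
      fun n => mul_nonneg (div_nonneg (mul_nonneg (Real.exp_pos _).le
        (pow_nonneg hlam.le _)) (Nat.cast_nonneg _)) (pow_nonneg hs0.le _)
    have hsummable : Summable fun n : ℕ =>
        Real.exp (-lam) * lam ^ n / (Nat.factorial n) * s ^ n := by
      have heq2 : ∀ n : ℕ, Real.exp (-lam) * lam ^ n / (Nat.factorial n) * s ^ n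
          = Real.exp (-lam) * ((lam * s) ^ n / (Nat.factorial n)) := by
        intro n; rw [mul_pow]; ring
      simp only [heq2]
      exact (Real.summable_pow_div_factorial _).mul_left _
    rw [← ENNReal.ofReal_tsum_of_nonneg hnonneg hsummable, cpl_real_tsum, ← Real.exp_add,
      show -lam + lam * s = lam * s - lam from by ring]
  -- Markov / Chernoff step
  set ε : ENNReal := ENNReal.ofReal (Real.exp (-(a * (θ * lam)))) with hε
  have hεpos : ε ≠ 0 := by
    simp only [hε, ne_eq, ENNReal.ofReal_eq_zero, not_le]
    exact Real.exp_pos _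
  have hεtop : ε ≠ ⊤ := ENNReal.ofReal_ne_top
  have hsub2 : {ω | S ω ≤ θ * lam} ⊆ {ω | ε ≤ F ω} := by
    intro ω hω
    simp only [Set.mem_setOf_eq] at hω ⊢
    refine ENNReal.ofReal_le_ofReal (Real.exp_le_exp.2 ?_)
    nlinarith
  have hle : μ {ω | S ω ≤ θ * lam} ≤ (∫⁻ ω, F ω ∂μ) / ε := by
    rw [ENNReal.le_div_iff_mul_le (Or.inl hεpos) (Or.inl hεtop)]
    calc μ {ω | S ω ≤ θ * lam} * ε ≤ μ {ω | ε ≤ F ω} * ε :=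
          mul_le_mul_left (measure_mono hsub2) ε
      _ = ε * μ {ω | ε ≤ F ω} := mul_comm _ _
      _ ≤ _ := mul_meas_ge_le_lintegral₀ hFm.aemeasurable ε
  have hfinal : (∫⁻ ω, F ω ∂μ) / ε = ENNReal.ofReal (Real.exp (-lam * (1 - s) ^ 2)) := by
    rw [hmain, hε, ← ENNReal.ofReal_div_of_pos (Real.exp_pos _), ← Real.exp_sub]
    congr 1
    congr 1
    have hθ : θ = s ^ 2 := hs2.symm
    rw [hθ, ha]
    field_simp
    ring
  show μ {ω | S ω ≤ θ * lam} ≤ _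
  rw [← hfinal]
  exact hle
end

section
/- Let d >= 1, let S subset Z^d, let 0 < sigma < 1 and N >= 1, and write Lambda = B_N^2 \ B_{sigma N}^2 for the Euclidean annulus in Z^d. Suppose that: (i) 0 is connected to the inner boundary of B_N^2 by a nearest-neighbor path in S; (ii) 0 is not connected to infinity in S (i.e. the connected component of 0 in S is finite); and (iii) some point of B_{sigma N}^2 is connected to infinity in S. Then the two-arms event occurs in Lambda: there exist two crossings of Lambda contained in S which are not connected to each other inside S ∩ Lambda. -/
open scoped BigOperators

/-- Nearest-neighbor adjacency on `ℤ^d`. -/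
def latAdj {d : ℕ} (x y : Fin d → ℤ) : Prop := (∑ i : Fin d, |x i - y i|) = 1

/-- `*`-adjacency on `ℤ^d` (`ℓ^∞`-distance one). -/
def latAdjStar {d : ℕ} (x y : Fin d → ℤ) : Prop := x ≠ y ∧ ∀ i : Fin d, |x i - y i| ≤ 1

/-- A nearest-neighbor path of length `k` staying in `S`. -/
def IsPathIn {d : ℕ} (S : Set (Fin d → ℤ)) (γ : ℕ → Fin d → ℤ) (k : ℕ) : Prop :=
  (∀ i ≤ k, γ i ∈ S) ∧ ∀ i < k, latAdj (γ i) (γ (i + 1))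

/-- `x` and `y` are connected by a nearest-neighbor path inside `S`. -/
def ConnIn {d : ℕ} (S : Set (Fin d → ℤ)) (x y : Fin d → ℤ) : Prop :=
  ∃ (γ : ℕ → Fin d → ℤ) (k : ℕ), IsPathIn S γ k ∧ γ 0 = x ∧ γ k = y

/-- A set is connected if any two of its points are joined by a path within it. -/
def ConnectedSet {d : ℕ} (S : Set (Fin d → ℤ)) : Prop :=
  ∀ x ∈ S, ∀ y ∈ S, ConnIn S x y

def IsStarPathIn {d : ℕ} (S : Set (Fin d → ℤ)) (γ : ℕ → Fin d → ℤ) (k : ℕ) : Prop :=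
  (∀ i ≤ k, γ i ∈ S) ∧ ∀ i < k, latAdjStar (γ i) (γ (i + 1))

def StarConnIn {d : ℕ} (S : Set (Fin d → ℤ)) (x y : Fin d → ℤ) : Prop :=
  ∃ (γ : ℕ → Fin d → ℤ) (k : ℕ), IsStarPathIn S γ k ∧ γ 0 = x ∧ γ k = y

def StarConnectedSet {d : ℕ} (S : Set (Fin d → ℤ)) : Prop :=
  ∀ x ∈ S, ∀ y ∈ S, StarConnIn S x y

/-- The connected component of `x` within `S`. -/
def connComp {d : ℕ} (S : Set (Fin d → ℤ)) (x : Fin d → ℤ) : Set (Fin d → ℤ) :=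
  {y | ConnIn S x y}

def starConnComp {d : ℕ} (S : Set (Fin d → ℤ)) (x : Fin d → ℤ) : Set (Fin d → ℤ) :=
  {y | StarConnIn S x y}

/-- Inner vertex boundary. -/
def innerBd {d : ℕ} (S : Set (Fin d → ℤ)) : Set (Fin d → ℤ) :=
  {x | x ∈ S ∧ ∃ y, y ∉ S ∧ latAdj x y}

/-- Outer vertex boundary. -/
def outerBd {d : ℕ} (S : Set (Fin d → ℤ)) : Set (Fin d → ℤ) :=
  {x | x ∉ S ∧ ∃ y ∈ S, latAdj x y}

/-- Closure: a set together with its outer boundary. -/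
def clo {d : ℕ} (S : Set (Fin d → ℤ)) : Set (Fin d → ℤ) := S ∪ outerBd S

/-- `fill U`: union of `U` with all finite connected components of its complement. -/
def fill {d : ℕ} (U : Set (Fin d → ℤ)) : Set (Fin d → ℤ) :=
  U ∪ {x | x ∉ U ∧ (connComp Uᶜ x).Finite}

/-- `Surr U A`: `U` is surrounded by `A`, i.e. every infinite connected set meeting `U`
meets `A`. -/
def Surr {d : ℕ} (U A : Set (Fin d → ℤ)) : Prop :=
  ∀ S : Set (Fin d → ℤ), S.Infinite → ConnectedSet S → (S ∩ U).Nonempty → (S ∩ A).Nonempty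

/-- Euclidean norm of a lattice point. -/
noncomputable def eucNorm {d : ℕ} (x : Fin d → ℤ) : ℝ :=
  Real.sqrt (∑ i : Fin d, ((x i : ℝ)) ^ 2)

/-- The range of a path of length `k`. -/
def pathPts {d : ℕ} (γ : ℕ → Fin d → ℤ) (k : ℕ) : Set (Fin d → ℤ) :=
  {p | ∃ i ≤ k, γ i = p}

lemma latAdj_symm' {d : ℕ} {x y : Fin d → ℤ} (h : latAdj x y) : latAdj y x := by
  unfold latAdj at *
  rw [Finset.sum_congr rfl (fun i _ => abs_sub_comm (y i) (x i))]
  exact h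

lemma connIn_mono' {d : ℕ} {S T : Set (Fin d → ℤ)} (hST : S ⊆ T) {x y : Fin d → ℤ}
    (h : ConnIn S x y) : ConnIn T x y := by
  obtain ⟨γ, k, ⟨hmem, hadj⟩, h0, hk⟩ := h
  exact ⟨γ, k, ⟨fun i hi => hST (hmem i hi), hadj⟩, h0, hk⟩

lemma connIn_symm' {d : ℕ} {S : Set (Fin d → ℤ)} {x y : Fin d → ℤ}
    (h : ConnIn S x y) : ConnIn S y x := by
  obtain ⟨γ, k, ⟨hmem, hadj⟩, h0, hk⟩ := h
  refine ⟨fun n => γ (k - n), k, ⟨fun i _ => hmem _ (Nat.sub_le _ _), ?_⟩, ?_, ?_⟩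
  · intro i hi
    have h1 : k - (i + 1) + 1 = k - i := by omega
    have h2 := latAdj_symm' (hadj (k - (i + 1)) (by omega))
    rw [h1] at h2
    exact h2
  · simpa using hk
  · simpa using h0

lemma connIn_trans' {d : ℕ} {S : Set (Fin d → ℤ)} {x y z : Fin d → ℤ}
    (hxy : ConnIn S x y) (hyz : ConnIn S y z) : ConnIn S x z := by
  obtain ⟨γ₁, k₁, ⟨hm1, ha1⟩, h10, h1k⟩ := hxy
  obtain ⟨γ₂, k₂, ⟨hm2, ha2⟩, h20, h2k⟩ := hyz
  refine ⟨fun n => if n < k₁ then γ₁ n else γ₂ (n - k₁), k₁ + k₂, ⟨?_, ?_⟩, ?_, ?_⟩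
  · intro i _
    by_cases hi : i < k₁
    · simpa [hi] using hm1 i hi.le
    · simpa [hi] using hm2 (i - k₁) (by omega)
  · intro i hi
    by_cases h1 : i + 1 < k₁
    · simpa [h1, Nat.lt_of_succ_lt h1] using ha1 i (by omega)
    · by_cases h2 : i < k₁
      · have hk : i + 1 = k₁ := by omega
        have : γ₂ (i + 1 - k₁) = γ₁ (i + 1) := by
          rw [hk]; simp [h20, ← h1k]
        show latAdj (if i < k₁ then γ₁ i else γ₂ (i - k₁)) (if i + 1 < k₁ then γ₁ (i + 1) else γ₂ (i + 1 - k₁))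
        rw [if_pos h2, if_neg h1, this]; exact ha1 i h2
      · have e1 : i - k₁ + 1 = i + 1 - k₁ := by omega
        have := ha2 (i - k₁) (by omega)
        rw [e1] at this
        simpa [h1, h2] using this
  · by_cases h0 : 0 < k₁
    · simpa [h0] using h10
    · have hk0 : k₁ = 0 := by omega
      simp [h0, h20, ← h1k, hk0, h10]
  · have : ¬ (k₁ + k₂ < k₁) := by omega
    simpa [this] using h2k

lemma connIn_of_path' {d : ℕ} {S : Set (Fin d → ℤ)} {γ : ℕ → Fin d → ℤ} {k : ℕ}
    (h : IsPathIn S γ k) {i : ℕ} (hi : i ≤ k) : ConnIn S (γ 0) (γ i) :=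
  ⟨γ, i, ⟨fun j hj => h.1 j (hj.trans hi), fun j hj => h.2 j (lt_of_lt_of_le hj hi)⟩, rfl, rfl⟩

lemma eucBall_finite {d : ℕ} (N : ℝ) : {x : Fin d → ℤ | eucNorm x ≤ N}.Finite := by
  apply Set.Finite.subset
    (Set.Finite.pi (fun i : Fin d => Set.finite_Icc (-⌈N⌉) ⌈N⌉))
  intro x hx
  simp only [Set.mem_pi, Set.mem_univ, Set.mem_Icc, forall_true_left]
  intro i
  have hsum : ((x i : ℝ)) ^ 2 ≤ ∑ j : Fin d, ((x j : ℝ)) ^ 2 :=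
    Finset.single_le_sum (f := fun j => ((x j : ℝ)) ^ 2)
      (fun j _ => sq_nonneg _) (Finset.mem_univ i)
  have habs : |(x i : ℝ)| ≤ N := by
    calc |(x i : ℝ)| = Real.sqrt (((x i : ℝ)) ^ 2) := (Real.sqrt_sq_eq_abs _).symm
      _ ≤ Real.sqrt (∑ j : Fin d, ((x j : ℝ)) ^ 2) := Real.sqrt_le_sqrt hsum
      _ ≤ N := hx
  constructor
  · have : (-(⌈N⌉ : ℤ) : ℝ) ≤ (x i : ℝ) := by
      push_cast
      calc -(⌈N⌉ : ℝ) ≤ -N := by simpa using Int.le_ceil N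
        _ ≤ -|(x i : ℝ)| := by simpa using habs
        _ ≤ (x i : ℝ) := neg_abs_le _
    exact_mod_cast this
  · have : ((x i : ℝ)) ≤ ((⌈N⌉ : ℤ) : ℝ) := by
      calc ((x i : ℝ)) ≤ |(x i : ℝ)| := le_abs_self _
        _ ≤ N := habs
        _ ≤ (⌈N⌉ : ℝ) := Int.le_ceil N
    exact_mod_cast this

lemma exists_cross' (P : ℕ → Prop) :
    ∀ k : ℕ, P 0 → ¬ P k → ∃ i < k, P i ∧ ¬ P (i + 1) := by
  intro k
  induction k with
  | zero => intro h0 hk; exact absurd h0 hk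
  | succ n ih =>
    intro h0 hk
    by_cases hn : P n
    · exact ⟨n, Nat.lt_succ_self n, hn, hk⟩
    · obtain ⟨i, hi, h⟩ := ih h0 hn
      exact ⟨i, hi.trans (Nat.lt_succ_self n), h⟩

/-- Two-arms inclusion: if `0` is connected in `S` to the inner boundary of the Euclidean
ball `B_N^2`, the cluster of `0` in `S` is finite, and some point of `B_{σN}^2` lies in an
infinite cluster of `S`, then there exist two crossings of the annulus
`Λ = B_N^2 \ B_{σN}^2` contained in `S` that are not connected inside `S ∩ Λ`. -/
theorem two_arms_of_finite_cluster {d : ℕ} (hd : 1 ≤ d) (S : Set (Fin d → ℤ))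
    (σ N : ℝ) (hσ0 : 0 < σ) (hσ1 : σ < 1) (hN : 1 ≤ N)
    (h1 : ∃ b ∈ innerBd {x : Fin d → ℤ | eucNorm x ≤ N}, ConnIn S 0 b)
    (h2 : (connComp S 0).Finite)
    (h3 : ∃ x₀ : Fin d → ℤ, eucNorm x₀ ≤ σ * N ∧ x₀ ∈ S ∧ (connComp S x₀).Infinite) :
    ∃ (γ₁ : ℕ → Fin d → ℤ) (k₁ : ℕ) (γ₂ : ℕ → Fin d → ℤ) (k₂ : ℕ),
      -- both are crossings of the annulus contained in `S`:
      IsPathIn S γ₁ k₁ ∧ IsPathIn S γ₂ k₂ ∧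
      (∃ i ≤ k₁, eucNorm (γ₁ i) ≤ σ * N) ∧
      (∃ i ≤ k₁, γ₁ i ∈ innerBd {x : Fin d → ℤ | eucNorm x ≤ N}) ∧
      (∃ i ≤ k₂, eucNorm (γ₂ i) ≤ σ * N) ∧
      (∃ i ≤ k₂, γ₂ i ∈ innerBd {x : Fin d → ℤ | eucNorm x ≤ N}) ∧
      -- and they are not connected to each other inside `S ∩ Λ`:
      ∀ p ∈ pathPts γ₁ k₁ ∩ {x | σ * N < eucNorm x ∧ eucNorm x ≤ N},
        ∀ q ∈ pathPts γ₂ k₂ ∩ {x | σ * N < eucNorm x ∧ eucNorm x ≤ N},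
          ¬ ConnIn (S ∩ {x | σ * N < eucNorm x ∧ eucNorm x ≤ N}) p q := by
  obtain ⟨b, hb, γ₁, k₁, hpath1, h10, h1k⟩ := h1
  obtain ⟨x₀, hx₀N, hx₀S, hinf⟩ := h3
  have hN0 : (0 : ℝ) ≤ N := le_trans zero_le_one hN
  have hσN0 : (0 : ℝ) ≤ σ * N := mul_nonneg hσ0.le hN0
  have hσNN : σ * N ≤ N := by nlinarith
  have hzero : eucNorm (0 : Fin d → ℤ) = 0 := by simp [eucNorm]
  -- find a point of the cluster of x₀ outside the ball
  obtain ⟨y, hyC, hyB⟩ := (hinf.diff (eucBall_finite (d := d) N)).nonempty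
  obtain ⟨γ, k, hpath, hγ0, hγk⟩ := hyC
  have hP0 : eucNorm (γ 0) ≤ N := by rw [hγ0]; exact le_trans hx₀N hσNN
  have hPk : ¬ eucNorm (γ k) ≤ N := by rw [hγk]; exact hyB
  obtain ⟨i, hik, hPi, hPi1⟩ := exists_cross' (fun n => eucNorm (γ n) ≤ N) k hP0 hPk
  refine ⟨γ₁, k₁, γ, i, hpath1, ?_, ?_, ?_, ?_, ?_, ?_⟩
  · exact ⟨fun j hj => hpath.1 j (hj.trans hik.le),
      fun j hj => hpath.2 j (hj.trans_le hik.le)⟩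
  · exact ⟨0, Nat.zero_le _, by rw [h10, hzero]; exact hσN0⟩
  · exact ⟨k₁, le_refl _, by rw [h1k]; exact hb⟩
  · exact ⟨0, Nat.zero_le _, by rw [hγ0]; exact hx₀N⟩
  · exact ⟨i, le_refl _, hPi, γ (i + 1), hPi1, hpath.2 i hik⟩
  · rintro p ⟨⟨j₁, hj₁, hj₁p⟩, -⟩ q ⟨⟨j₂, hj₂, hj₂q⟩, -⟩ hcon
    have c1 : ConnIn S 0 p := by
      rw [← hj₁p, ← h10]; exact connIn_of_path' hpath1 hj₁
    have c2 : ConnIn S x₀ q := by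
      rw [← hj₂q, ← hγ0]; exact connIn_of_path' hpath (hj₂.trans hik.le)
    have c3 : ConnIn S p q := connIn_mono' Set.inter_subset_left hcon
    have c0x : ConnIn S 0 x₀ :=
      connIn_trans' (connIn_trans' c1 c3) (connIn_symm' c2)
    have hsub : connComp S x₀ ⊆ connComp S 0 :=
      fun z hz => connIn_trans' c0x hz
    exact (hinf.mono hsub) h2
end
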